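/- Let G be a finite simple graph on n vertices, let k ≥ 2 be an integer, and let c₁ ≥ c₂ ≥ ⋯ ≥ c_m be the sizes of the connected components of G. Suppose that (i) c₁ ≤ n/k, (ii) the number of components of size at most 2 is at least r·n for some real r > 0, (iii) c_i ≤ r·n/k for every index i > k, and additionally (iv) the number of components of size exactly 1 (isolated vertices) is at least k − 1. Then the k-section width satisfies w_k(G) = 0. -/

import Mathlib

open Finset

/-- The size (number of vertices) of a connected component of a graph on `Fin n`. -/
noncomputable def compSize {n : ℕ} (G : SimpleGraph (Fin n)) (C : G.ConnectedComponent) : ℕ :=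
  {v : Fin n | G.connectedComponentMk v = C}.ncard

/-- A labelled partition `P : Fin n → Fin k` is balanced if the part sizes pairwise
differ by at most 1. -/
def IsBalancedPartition {n k : ℕ} (P : Fin n → Fin k) : Prop :=
  ∀ j j' : Fin k,
    ((Finset.univ.filter (fun i => P i = j)).card : ℤ)
      ≤ ((Finset.univ.filter (fun i => P i = j')).card : ℤ) + 1

/-- The number of edges of `G` whose two endpoints lie in two distinct parts of `P`. -/
noncomputable def cutSize {n k : ℕ} (G : SimpleGraph (Fin n)) (P : Fin n → Fin k) : ℕ :=
  {e ∈ G.edgeSet | ¬ (Sym2.map P e).IsDiag}.ncard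

/-- The `k`-section width: the minimum number of cross edges over balanced `k`-partitions. -/
noncomputable def kSectionWidth {n : ℕ} (G : SimpleGraph (Fin n)) (k : ℕ) : ℕ :=
  sInf {w | ∃ P : Fin n → Fin k, IsBalancedPartition P ∧ cutSize G P = w}

namespace KSectionAux
noncomputable def minBin {k : ℕ} (hk : 0 < k) (L : Fin k → ℕ) : Fin k :=
  (Finset.exists_min_image Finset.univ L ⟨⟨0, hk⟩, Finset.mem_univ _⟩).choose
variable {k m : ℕ}
noncomputable def gL (hk : 0 < k) (c : Fin m → ℕ) : ℕ → Fin k → ℕ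
  | 0 => fun _ => 0
  | i + 1 =>
    if h : i < m then
      fun j =>
        if j = minBin hk (gL hk c i) then gL hk c i j + c ⟨i, h⟩ else gL hk c i j
    else gL hk c i
noncomputable def sel (hk : 0 < k) (c : Fin m → ℕ) (i : ℕ) : Fin k :=
  minBin hk (gL hk c i)
lemma gL_succ_of_lt (hk : 0 < k) (c : Fin m → ℕ) {i : ℕ} (h : i < m) (j : Fin k) :
    gL hk c (i + 1) j =
      if j = sel hk c i then gL hk c i j + c ⟨i, h⟩ else gL hk c i j := by
  rw [gL, dif_pos h]; rfl

lemma gL_eq_add_sum (hk : 0 < k) (c : Fin m → ℕ) (a : ℕ) (j : Fin k) :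
    ∀ b, a ≤ b → gL hk c b j = gL hk c a j +
      ∑ i ∈ univ.filter
        (fun i : Fin m => a ≤ (i : ℕ) ∧ (i : ℕ) < b ∧ sel hk c (i : ℕ) = j), c i := by
  refine Nat.le_induction ?_ ?_
  · have : (univ.filter
        (fun i : Fin m => a ≤ (i : ℕ) ∧ (i : ℕ) < a ∧ sel hk c (i : ℕ) = j)) = ∅ := by
      apply Finset.filter_false_of_mem
      intro x _
      omega
    rw [this, sum_empty, add_zero]
  · intro b hab ih
    by_cases hbm : b < m
    · have hfil : (univ.filter
          (fun i : Fin m => a ≤ (i : ℕ) ∧ (i : ℕ) < b + 1 ∧ sel hk c (i : ℕ) = j))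
          = if sel hk c b = j then
              insert ⟨b, hbm⟩ (univ.filter
                (fun i : Fin m => a ≤ (i : ℕ) ∧ (i : ℕ) < b ∧ sel hk c (i : ℕ) = j))
            else (univ.filter
                (fun i : Fin m => a ≤ (i : ℕ) ∧ (i : ℕ) < b ∧ sel hk c (i : ℕ) = j)) := by
        split
        next hsel =>
          ext x
          simp only [mem_insert, mem_filter, mem_univ, true_and]
          constructor
          · rintro ⟨hax, hxb, hselx⟩
            rcases Nat.lt_or_ge (x : ℕ) b with h | h
            · exact Or.inr ⟨hax, h, hselx⟩
            · left
              have : (x : ℕ) = b := by omega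
              exact Fin.ext this
          · rintro (rfl | ⟨hax, hxb, hselx⟩)
            · exact ⟨by simpa using hab, by simp, by simpa using hsel⟩
            · exact ⟨hax, by omega, hselx⟩
        next hsel =>
          ext x
          simp only [mem_filter, mem_univ, true_and]
          constructor
          · rintro ⟨hax, hxb, hselx⟩
            refine ⟨hax, ?_, hselx⟩
            rcases Nat.lt_or_ge (x : ℕ) b with h | h
            · exact h
            · exfalso
              have : (x : ℕ) = b := by omega
              apply hsel
              rw [← this]
              exact hselx
          · rintro ⟨hax, hxb, hselx⟩
            exact ⟨hax, by omega, hselx⟩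
      rw [hfil, gL_succ_of_lt hk c hbm, ih]
      by_cases hsel : sel hk c b = j
      · rw [if_pos hsel, if_pos hsel.symm, sum_insert (by simp), add_assoc,
          add_comm (c ⟨b, hbm⟩)]
      · rw [if_neg hsel, if_neg (fun h => hsel h.symm)]
    · have : gL hk c (b+1) j = gL hk c b j := by rw [gL, dif_neg hbm]
      rw [this, ih]
      congr 1
      apply Finset.sum_congr _ (fun _ _ => rfl)
      apply Finset.filter_congr
      intro x _
      have := x.isLt
      constructor
      · rintro ⟨h1, h2, h3⟩; exact ⟨h1, by omega, h3⟩
      · rintro ⟨h1, h2, h3⟩; exact ⟨h1, by omega, h3⟩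

lemma minBin_le {k : ℕ} (hk : 0 < k) (L : Fin k → ℕ) (j : Fin k) :
    L (minBin hk L) ≤ L j := by
  have h := (Finset.exists_min_image Finset.univ L ⟨⟨0, hk⟩, Finset.mem_univ _⟩).choose_spec
  exact h.2 j (Finset.mem_univ j)

lemma sel_le (hk : 0 < k) (c : Fin m → ℕ) (i : ℕ) (j : Fin k) :
    gL hk c i (sel hk c i) ≤ gL hk c i j := minBin_le hk _ j

lemma gL_succ_of_ge (hk : 0 < k) (c : Fin m → ℕ) {i : ℕ} (h : ¬ i < m) (j : Fin k) :
    gL hk c (i + 1) j = gL hk c i j := by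
  rw [gL, dif_neg h]

lemma gL_le_succ (hk : 0 < k) (c : Fin m → ℕ) (i : ℕ) (j : Fin k) :
    gL hk c i j ≤ gL hk c (i + 1) j := by
  by_cases h : i < m
  · rw [gL_succ_of_lt hk c h]; split <;> omega
  · rw [gL_succ_of_ge hk c h]

lemma gL_mono (hk : 0 < k) (c : Fin m → ℕ) {a b : ℕ} (hab : a ≤ b) (j : Fin k) :
    gL hk c a j ≤ gL hk c b j := by
  induction b with
  | zero => simp_all
  | succ b ih =>
    rcases Nat.lt_or_ge a (b+1) with h | h
    · exact le_trans (ih (by omega)) (gL_le_succ hk c b j)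
    · have : a = b + 1 := by omega
      subst this; rfl

lemma card_nonzero (hk : 0 < k) (c : Fin m → ℕ) (hm : k ≤ m) (hpos : ∀ i, 1 ≤ c i) :
    ∀ i, i ≤ k → (univ.filter (fun j : Fin k => gL hk c i j ≠ 0)).card = i := by
  intro i
  induction i with
  | zero => intro _; simp [gL]
  | succ i ih =>
    intro hik
    have hikk : i < k := by omega
    have him : i < m := by omega
    have hcard := ih (by omega)
    -- there is a zero bin
    have hzero : gL hk c i (sel hk c i) = 0 := by
      by_contra hne
      have hall : ∀ j : Fin k, gL hk c i j ≠ 0 := by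
        intro j h0
        exact hne (Nat.le_zero.mp (h0 ▸ sel_le hk c i j))
      have : (univ.filter (fun j : Fin k => gL hk c i j ≠ 0)) = univ := by
        apply Finset.filter_true_of_mem
        intro j _; exact hall j
      rw [this] at hcard
      simp at hcard
      omega
    have hnotmem : sel hk c i ∉ (univ.filter (fun j : Fin k => gL hk c i j ≠ 0)) := by
      simp [hzero]
    have hfil : (univ.filter (fun j : Fin k => gL hk c (i+1) j ≠ 0))
        = insert (sel hk c i) (univ.filter (fun j : Fin k => gL hk c i j ≠ 0)) := by
      ext j
      simp only [mem_insert, mem_filter, mem_univ, true_and]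
      rw [gL_succ_of_lt hk c him]
      by_cases hj : j = sel hk c i
      · subst hj
        simp [hzero]
        have := hpos ⟨i, him⟩
        omega
      · rw [if_neg hj]
        tauto
    rw [hfil, Finset.card_insert_of_notMem hnotmem, hcard]

lemma bins_hit (hk : 0 < k) (c : Fin m → ℕ) (hm : k ≤ m) (hpos : ∀ i, 1 ≤ c i)
    (j : Fin k) :
    ∃ i : Fin m, sel hk c (i : ℕ) = j := by
  have hcard := card_nonzero hk c hm hpos k le_rfl
  have hall : ∀ j' : Fin k, gL hk c k j' ≠ 0 := by
    have : (univ.filter (fun j : Fin k => gL hk c k j ≠ 0)) = univ := by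
      apply Finset.eq_univ_of_card
      rw [hcard]; simp
    intro j'
    have h2 : j' ∈ univ.filter (fun j : Fin k => gL hk c k j ≠ 0) := by
      rw [this]; exact Finset.mem_univ j'
    exact (Finset.mem_filter.mp h2).2
  have hmj : gL hk c m j ≠ 0 := by
    intro h0
    exact hall j (Nat.le_zero.mp (h0 ▸ gL_mono hk c hm j))
  have hsum := gL_eq_add_sum hk c 0 j m (Nat.zero_le m)
  simp only [gL, Nat.zero_le, true_and, zero_add] at hsum
  rw [hsum] at hmj
  obtain ⟨i, hi, -⟩ := Finset.exists_ne_zero_of_sum_ne_zero hmj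
  exact ⟨i, (Finset.mem_filter.mp hi).2.2⟩

lemma exists_balanced (hk : 2 ≤ k) (hm : k ≤ m) (c : Fin m → ℕ)
    (hmono : Antitone c) (hpos : ∀ i, 1 ≤ c i)
    (h1 : ∀ i, k * c i ≤ ∑ x, c x)
    (hq : ∀ i : Fin m, k ≤ (i : ℕ) →
      k * c i ≤ (univ.filter (fun x : Fin m => c x ≤ 2)).card)
    (h4 : k - 1 ≤ (univ.filter (fun x : Fin m => c x = 1)).card) :
    ∃ f : Fin m → Fin k, ∀ j j' : Fin k,
      (∑ i ∈ univ.filter (fun i => f i = j), c i)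
        ≤ (∑ i ∈ univ.filter (fun i => f i = j'), c i) + 1 := by
  have hk0 : 0 < k := by omega
  refine ⟨fun i => sel hk0 c (i : ℕ), ?_⟩
  set L : Fin k → ℕ := gL hk0 c m with hLdef
  have hLsum : ∀ j, (∑ i ∈ univ.filter (fun i : Fin m => sel hk0 c (i:ℕ) = j), c i)
      = L j := by
    intro j
    have h := gL_eq_add_sum hk0 c 0 j m (Nat.zero_le m)
    simp only [gL, zero_add] at h
    rw [hLdef, h]
    congr 1
    apply Finset.filter_congr
    intro x _
    simp [x.isLt]
  have htot : ∑ j, L j = ∑ x, c x := by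
    rw [← Finset.sum_fiberwise_of_maps_to (g := fun i : Fin m => sel hk0 c (i:ℕ))
      (t := univ) (fun x _ => mem_univ _) c]
    exact Finset.sum_congr rfl (fun j _ => (hLsum j).symm)
  obtain ⟨M, -, hM⟩ := Finset.exists_max_image univ L ⟨⟨0, hk0⟩, mem_univ _⟩
  have hMax : ∀ j, L j ≤ L M := fun j => hM j (mem_univ j)
  have hT : (univ.filter (fun i : Fin m => sel hk0 c (i:ℕ) = M)).Nonempty := by
    obtain ⟨i, hi⟩ := bins_hit hk0 c hm hpos M
    exact ⟨i, mem_filter.mpr ⟨mem_univ _, hi⟩⟩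
  set istar : Fin m := (univ.filter (fun i : Fin m => sel hk0 c (i:ℕ) = M)).max' hT
    with histar
  have hselstar : sel hk0 c (istar : ℕ) = M := by
    have := Finset.max'_mem _ hT
    rw [← histar] at this
    exact (mem_filter.mp this).2
  have hlast : ∀ i : Fin m, sel hk0 c (i:ℕ) = M → (i : ℕ) ≤ (istar : ℕ) := by
    intro i hi
    exact Finset.le_max' _ i (mem_filter.mpr ⟨mem_univ _, hi⟩)
  set v : ℕ := gL hk0 c (istar : ℕ) M with hv
  have hstep : gL hk0 c ((istar : ℕ) + 1) M = v + c istar := by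
    rw [gL_succ_of_lt hk0 c istar.isLt, if_pos hselstar.symm, hv]
  have hconst : L M = gL hk0 c ((istar : ℕ) + 1) M := by
    have h := gL_eq_add_sum hk0 c ((istar : ℕ) + 1) M m istar.isLt
    have hempt : (univ.filter (fun i : Fin m =>
        (istar : ℕ) + 1 ≤ (i : ℕ) ∧ (i : ℕ) < m ∧ sel hk0 c (i : ℕ) = M)) = ∅ := by
      apply Finset.filter_false_of_mem
      intro x _
      rintro ⟨hx1, -, hx3⟩
      have := hlast x hx3
      omega
    rw [hLdef, h, hempt, sum_empty, add_zero]
  have hLM : L M = v + c istar := by rw [hconst, hstep]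
  have hminstar : ∀ j, v ≤ gL hk0 c (istar : ℕ) j := by
    intro j
    have := sel_le hk0 c (istar : ℕ) j
    rwa [hselstar] at this
  have hbelow : ∀ j, gL hk0 c (istar : ℕ) j ≤ L j :=
    fun j => gL_mono hk0 c (le_of_lt istar.isLt) j
  intro j j'
  rw [hLsum, hLsum]
  by_cases hcase : (istar : ℕ) < k
  · -- all loads equal
    have hv0 : v = 0 := by
      have hcard := card_nonzero hk0 c hm hpos (istar : ℕ) (le_of_lt hcase)
      have hzero : ∃ j0, gL hk0 c (istar : ℕ) j0 = 0 := by
        by_contra hno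
        push_neg at hno
        have : (univ.filter (fun j : Fin k => gL hk0 c (istar : ℕ) j ≠ 0)) = univ :=
          Finset.filter_true_of_mem (fun j _ => hno j)
        rw [this] at hcard
        simp at hcard
        omega
      obtain ⟨j0, hj0⟩ := hzero
      have := hminstar j0
      omega
    have hall : ∀ j0 : Fin k, L M ≤ L j0 := by
      intro j0
      have herase : ∑ x ∈ univ.erase j0, L x ≤ (k - 1) * L M := by
        have h1 := Finset.sum_le_card_nsmul (univ.erase j0) L (L M)
          (fun x _ => hMax x)
        rw [Finset.card_erase_of_mem (mem_univ j0)] at h1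
        simpa [smul_eq_mul] using h1
      have hsplit : L j0 + ∑ x ∈ univ.erase j0, L x = ∑ j, L j :=
        Finset.add_sum_erase _ _ (mem_univ j0)
      have hklm : k * L M ≤ ∑ x, c x := by
        rw [hLM, hv0, zero_add]
        exact h1 istar
      have hexp : k * L M = L M + (k - 1) * L M := by
        have hkeq : k = 1 + (k - 1) := by omega
        calc k * L M = (1 + (k - 1)) * L M := by rw [← hkeq]
        _ = L M + (k - 1) * L M := by ring
      omega
    exact le_trans (hMax j) (le_trans (hall j') (Nat.le_succ _))
  · push_neg at hcase
    by_cases hc1 : c istar ≤ 1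
    · have h1' := hMax j
      have h2' := hminstar j'
      have h3' := hbelow j'
      omega
    · by_cases hc2 : c istar = 2
      · -- low-set argument using singletons
        have hlow_end : ∀ j0 : Fin k, v + 1 ≤ L j0 := by
          set low : ℕ → Finset (Fin k) :=
            fun i => univ.filter (fun j0 => gL hk0 c i j0 ≤ v) with hlowdef
          have hlow_subset : ∀ i, low (i+1) ⊆ low i := by
            intro i j0 hj0
            rw [hlowdef, mem_filter] at *
            exact ⟨mem_univ _, le_trans (gL_le_succ hk0 c i j0) hj0.2⟩
          have hstep2 : ∀ i, (istar : ℕ) < i → i < m → (low i).Nonempty →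
              (low (i+1)).card + 1 ≤ (low i).card := by
            intro i hi1 hi2 ⟨j0, hj0⟩
            have hj0v : gL hk0 c i j0 ≤ v := (mem_filter.mp hj0).2
            have hselmem : sel hk0 c i ∈ low i := by
              rw [hlowdef, mem_filter]
              exact ⟨mem_univ _, le_trans (sel_le hk0 c i j0) hj0v⟩
            have hselout : sel hk0 c i ∉ low (i+1) := by
              rw [hlowdef, mem_filter]
              rintro ⟨-, habs⟩
              rw [gL_succ_of_lt hk0 c hi2, if_pos rfl] at habs
              have hge : v ≤ gL hk0 c i (sel hk0 c i) :=
                le_trans (hminstar _) (gL_mono hk0 c (le_of_lt hi1) _)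
              have := hpos ⟨i, hi2⟩
              omega
            have hss : low (i+1) ⊂ low i :=
              ⟨hlow_subset i, fun h => hselout (h hselmem)⟩
            exact Finset.card_lt_card hss
          set S : ℕ → Finset (Fin m) :=
            fun i => univ.filter (fun x : Fin m => c x = 1 ∧ i ≤ (x : ℕ)) with hSdef
          have hclaim : ∀ i, (istar : ℕ) + 1 ≤ i → i ≤ m →
              (low i).card ≤ (S i).card := by
            refine Nat.le_induction ?_ ?_
            · intro _
              have hlo : (low ((istar : ℕ) + 1)).card ≤ k - 1 := by
                have hsub : low ((istar : ℕ) + 1) ⊆ univ.erase M := by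
                  intro j0 hj0
                  rw [hlowdef, mem_filter] at hj0
                  rw [Finset.mem_erase]
                  refine ⟨?_, mem_univ _⟩
                  rintro rfl
                  rw [hstep, hc2] at hj0
                  omega
                have := Finset.card_le_card hsub
                rwa [Finset.card_erase_of_mem (mem_univ M), Finset.card_univ,
                  Fintype.card_fin] at this
              have hhi : k - 1 ≤ (S ((istar : ℕ) + 1)).card := by
                refine le_trans h4 (Finset.card_le_card ?_)
                intro x hx
                rw [mem_filter] at hx
                rw [hSdef, mem_filter]
                refine ⟨mem_univ _, hx.2, ?_⟩
                by_contra hxle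
                push_neg at hxle
                have hxle' : x ≤ istar := by
                  rw [Fin.le_def]; omega
                have := hmono hxle'
                omega
              omega
            · intro i hi ih hi1
              have him : i < m := by omega
              have ihcard := ih (by omega)
              by_cases hne : (low i).Nonempty
              · have h5 := hstep2 i (by omega) him hne
                have hSsub : S i ⊆ insert (⟨i, him⟩ : Fin m) (S (i+1)) := by
                  intro x hx
                  rw [hSdef, mem_filter] at hx
                  rw [mem_insert]
                  rcases Nat.lt_or_ge (i : ℕ) (x : ℕ) with h | h
                  · right
                    rw [hSdef, mem_filter]
                    exact ⟨mem_univ _, hx.2.1, by omega⟩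
                  · left
                    have : (x : ℕ) = i := by
                      have := hx.2.2
                      omega
                    exact Fin.ext this
                have h6 : (S i).card ≤ (S (i+1)).card + 1 :=
                  le_trans (Finset.card_le_card hSsub) (Finset.card_insert_le _ _)
                omega
              · rw [Finset.not_nonempty_iff_eq_empty] at hne
                have : low (i+1) = ∅ :=
                  Finset.subset_empty.mp (hne ▸ hlow_subset i)
                simp [this]
          have hfin := hclaim m istar.isLt le_rfl
          have hSm : S m = ∅ := by
            apply Finset.filter_false_of_mem
            intro x _
            rintro ⟨-, hx2⟩
            have := x.isLt
            omega
          rw [hSm] at hfin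
          simp only [Finset.card_empty, Nat.le_zero, Finset.card_eq_zero] at hfin
          intro j0
          have : j0 ∉ low m := by rw [hfin]; exact notMem_empty _
          rw [hlowdef, mem_filter] at this
          push_neg at this
          have := this (mem_univ j0)
          have hLj0 : L j0 = gL hk0 c m j0 := rfl
          omega
        have h1' := hMax j
        have h2' := hlow_end j'
        omega
      · -- c istar ≥ 3 : contradiction
        exfalso
        have h3c : 3 ≤ c istar := by
          have := hpos istar
          omega
        have hqc := hq istar hcase
        set Q : Finset (Fin m) := univ.filter (fun x : Fin m => c x ≤ 2) with hQdef
        have hQlate : ∀ x ∈ Q, (istar : ℕ) < (x : ℕ) := by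
          intro x hx
          rw [hQdef, mem_filter] at hx
          by_contra hxle
          push_neg at hxle
          have hxle' : x ≤ istar := by rw [Fin.le_def]; omega
          have := hmono hxle'
          omega
        have hfib : ∑ x ∈ Q, c x = ∑ j0 : Fin k,
            ∑ x ∈ Q.filter (fun x : Fin m => sel hk0 c (x:ℕ) = j0), c x :=
          (Finset.sum_fiberwise_of_maps_to (fun x _ => mem_univ _) c).symm
        have hinnerM : ∑ x ∈ Q.filter (fun x : Fin m => sel hk0 c (x:ℕ) = M), c x = 0 := by
          rw [Finset.sum_eq_zero_iff]
          intro x hx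
          rw [mem_filter] at hx
          exfalso
          have := hlast x hx.2
          have := hQlate x hx.1
          omega
        have hinner : ∀ j0 : Fin k, j0 ≠ M →
            ∑ x ∈ Q.filter (fun x : Fin m => sel hk0 c (x:ℕ) = j0), c x ≤ c istar := by
          intro j0 hj0
          have hsum := gL_eq_add_sum hk0 c (istar : ℕ) j0 m (le_of_lt istar.isLt)
          have hsub : Q.filter (fun x : Fin m => sel hk0 c (x:ℕ) = j0) ⊆
              univ.filter (fun i : Fin m =>
                (istar : ℕ) ≤ (i : ℕ) ∧ (i : ℕ) < m ∧ sel hk0 c (i : ℕ) = j0) := by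
            intro x hx
            rw [mem_filter] at hx
            rw [mem_filter]
            exact ⟨mem_univ _, le_of_lt (hQlate x hx.1), x.isLt, hx.2⟩
          have hle2 : ∑ x ∈ Q.filter (fun x : Fin m => sel hk0 c (x:ℕ) = j0), c x ≤
              ∑ i ∈ univ.filter (fun i : Fin m =>
                (istar : ℕ) ≤ (i : ℕ) ∧ (i : ℕ) < m ∧ sel hk0 c (i : ℕ) = j0), c i :=
            Finset.sum_le_sum_of_subset hsub
          have hup : gL hk0 c m j0 ≤ v + c istar := hLM ▸ hMax j0
          have hlo := hminstar j0
          omega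
        have hbound : ∑ x ∈ Q, c x ≤ (k - 1) * c istar := by
          rw [hfib, ← Finset.add_sum_erase _ _ (mem_univ M), hinnerM, zero_add]
          have h7 := Finset.sum_le_card_nsmul (univ.erase M)
            (fun j0 => ∑ x ∈ Q.filter (fun x : Fin m => sel hk0 c (x:ℕ) = j0), c x)
            (c istar) (fun x hx => hinner x (Finset.mem_erase.mp hx).1)
          rw [Finset.card_erase_of_mem (mem_univ M), Finset.card_univ,
            Fintype.card_fin] at h7
          simpa [smul_eq_mul] using h7
        have hcardQ : Q.card ≤ ∑ x ∈ Q, c x := by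
          rw [Finset.card_eq_sum_ones]
          exact Finset.sum_le_sum (fun x _ => hpos x)
        have hexp : k * c istar = c istar + (k - 1) * c istar := by
          have hkeq : k = 1 + (k - 1) := by omega
          calc k * c istar = (1 + (k - 1)) * c istar := by rw [← hkeq]
          _ = c istar + (k - 1) * c istar := by ring
        omega
end KSectionAux

theorem ksection_eq_zero_of_small_components
    {n k m : ℕ} (hk : 2 ≤ k) (G : SimpleGraph (Fin n))
    (c : Fin m → ℕ) (hmono : Antitone c)
    (e : G.ConnectedComponent ≃ Fin m)
    (hsize : ∀ C : G.ConnectedComponent, compSize G C = c (e C))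
    (r : ℝ) (hr : 0 < r)
    (h1 : ∀ i : Fin m, (c i : ℝ) ≤ (n : ℝ) / k)
    (h2 : r * n ≤ ((Finset.univ.filter (fun i : Fin m => c i ≤ 2)).card : ℝ))
    (h3 : ∀ i : Fin m, k ≤ (i : ℕ) → (c i : ℝ) ≤ r * n / k)
    (h4 : k - 1 ≤ (Finset.univ.filter (fun i : Fin m => c i = 1)).card) :
    kSectionWidth G k = 0 := by
  classical
  have hk0 : 0 < k := by omega
  have hkR : (0 : ℝ) < k := by exact_mod_cast hk0
  haveI : Fintype G.ConnectedComponent := Fintype.ofEquiv (Fin m) e.symm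
  have hcomp_card : ∀ C : G.ConnectedComponent,
      compSize G C = (univ.filter (fun v : Fin n => G.connectedComponentMk v = C)).card := by
    intro C
    rw [compSize, ← Set.ncard_coe_finset]
    congr 1
    ext v
    simp
  have hsumc : ∑ i : Fin m, c i = n := by
    have h0 : ∑ C : G.ConnectedComponent, compSize G C = n := by
      have := Finset.card_eq_sum_card_fiberwise
        (f := fun v : Fin n => G.connectedComponentMk v) (s := univ) (t := univ)
        (fun v _ => mem_univ _)
      rw [Finset.card_univ, Fintype.card_fin] at this
      calc ∑ C : G.ConnectedComponent, compSize G C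
          = ∑ C : G.ConnectedComponent,
            (univ.filter (fun v : Fin n => G.connectedComponentMk v = C)).card :=
            Finset.sum_congr rfl (fun C _ => hcomp_card C)
        _ = n := this.symm
    rw [← h0]
    exact (Fintype.sum_equiv e (fun C => compSize G C) c (fun C => hsize C)).symm
  have hpos : ∀ i : Fin m, 1 ≤ c i := by
    intro i
    obtain ⟨v, hv⟩ := (e.symm i).exists_rep
    have hvmem : G.connectedComponentMk v = e.symm i := hv
    have h5 : compSize G (e.symm i) = c i := by
      rw [hsize, e.apply_symm_apply]
    rw [← h5, compSize]
    have : 0 < ({w : Fin n | G.connectedComponentMk w = e.symm i}).ncard := by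
      rw [Set.ncard_pos (Set.toFinite _)]
      exact ⟨v, hvmem⟩
    omega
  have h1' : ∀ i : Fin m, k * c i ≤ ∑ x, c x := by
    intro i
    rw [hsumc]
    have h := h1 i
    rw [le_div_iff₀ hkR] at h
    have : ((k * c i : ℕ) : ℝ) ≤ (n : ℝ) := by push_cast; linarith
    exact_mod_cast this
  have hq' : ∀ i : Fin m, k ≤ (i : ℕ) →
      k * c i ≤ (univ.filter (fun x : Fin m => c x ≤ 2)).card := by
    intro i hi
    have h := h3 i hi
    rw [le_div_iff₀ hkR] at h
    have : ((k * c i : ℕ) : ℝ)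
        ≤ ((univ.filter (fun x : Fin m => c x ≤ 2)).card : ℝ) := by
      push_cast
      nlinarith
    exact_mod_cast this
  have hm : k ≤ m := by
    have hcard1 : (univ.filter (fun i : Fin m => c i = 1)).card ≤ m := by
      refine le_trans (Finset.card_le_card (Finset.filter_subset _ _)) ?_
      rw [Finset.card_univ, Fintype.card_fin]
    by_contra hlt
    push_neg at hlt
    have hmeq : m = k - 1 := by omega
    have huniv : (univ.filter (fun i : Fin m => c i = 1)) = univ := by
      apply Finset.eq_univ_of_card
      rw [Fintype.card_fin]
      omega
    have hm1 : 0 < m := by omega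
    have hall : ∀ i : Fin m, c i = 1 := by
      intro i
      have : i ∈ univ.filter (fun i : Fin m => c i = 1) := by
        rw [huniv]; exact mem_univ i
      exact (mem_filter.mp this).2
    have hsum1 : ∑ x : Fin m, c x = m := by
      rw [Finset.sum_congr rfl (fun x _ => hall x)]
      simp
    have := h1' ⟨0, hm1⟩
    rw [hsum1, hall ⟨0, hm1⟩] at this
    omega
  obtain ⟨f, hf⟩ := KSectionAux.exists_balanced hk hm c hmono hpos h1' hq' h4
  set P : Fin n → Fin k := fun v => f (e (G.connectedComponentMk v)) with hP
  have hfiber : ∀ j : Fin k, (univ.filter (fun v : Fin n => P v = j)).card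
      = ∑ i ∈ univ.filter (fun i : Fin m => f i = j), c i := by
    intro j
    rw [Finset.card_eq_sum_card_fiberwise
      (f := fun v : Fin n => e (G.connectedComponentMk v))
      (t := univ.filter (fun i : Fin m => f i = j))
      (fun v hv => by
        rw [Finset.mem_coe, mem_filter] at hv ⊢
        exact ⟨mem_univ _, hv.2⟩)]
    refine Finset.sum_congr rfl ?_
    intro i hi
    have hfij : f i = j := (mem_filter.mp hi).2
    have hfe : ((univ.filter (fun v : Fin n => P v = j)).filter
        (fun v => e (G.connectedComponentMk v) = i))
        = univ.filter (fun v : Fin n => G.connectedComponentMk v = e.symm i) := by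
      ext v
      simp only [mem_filter, mem_univ, true_and, hP]
      constructor
      · rintro ⟨-, h⟩
        rw [← h, Equiv.symm_apply_apply]
      · intro h
        have h2 : e (G.connectedComponentMk v) = i := by
          rw [h, Equiv.apply_symm_apply]
        exact ⟨by rw [h2, hfij], h2⟩
    rw [hfe, ← hcomp_card, hsize, e.apply_symm_apply]
  have hbal : IsBalancedPartition P := by
    intro j j'
    have := hf j j'
    rw [hfiber j, hfiber j']
    exact_mod_cast this
  have hcut : cutSize G P = 0 := by
    rw [cutSize]
    have hempty : {ed ∈ G.edgeSet | ¬ (Sym2.map P ed).IsDiag} = ∅ := by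
      ext ed
      simp only [Set.mem_setOf_eq, Set.mem_empty_iff_false, iff_false, not_and, not_not]
      induction ed with
      | _ u v =>
        intro hadj
        rw [SimpleGraph.mem_edgeSet] at hadj
        have hcv : G.connectedComponentMk u = G.connectedComponentMk v :=
          SimpleGraph.ConnectedComponent.connectedComponentMk_eq_of_adj hadj
        have : P u = P v := by rw [hP]; simp [hcv]
        rw [Sym2.map_pair_eq, Sym2.isDiag_iff_proj_eq]
        exact this
    rw [hempty, Set.ncard_empty]
  rw [kSectionWidth]
  exact Nat.sInf_eq_zero.mpr (Or.inl ⟨P, hbal, hcut⟩)
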